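/- Let Ξ be an x-tower site in F^2 with tower parameters m_0 > m_1 > ... > m_ν ≥ 0. Then the initial ideal of the vanishing ideal I(Ξ) with respect to the total degree lexicographic order (x ≻ y) is the monomial ideal generated by {x^{m_0+1}, x^{m_1+1}y, x^{m_2+1}y^2, ..., x^{m_ν+1}y^ν, y^{ν+1}}. -/

import Mathlib

open MvPolynomial

noncomputable def vanishingIdeal {F : Type*} [Field F] (Ξ : Set (F × F)) :
    Ideal (MvPolynomial (Fin 2) F) :=
  ⨅ ξ ∈ Ξ, RingHom.ker (eval (fun i : Fin 2 => if i = 0 then ξ.1 else ξ.2) :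
    MvPolynomial (Fin 2) F →+* F)

/-- The exponent vector of the monomial `x^a y^b`. -/
noncomputable def deg2 (a b : ℕ) : Fin 2 →₀ ℕ := Finsupp.single 0 a + Finsupp.single 1 b

/-- The tdlex order (total degree first, then lexicographically with `x ≻ y`)
on exponent pairs. -/
def tdlexLE (a b : ℕ × ℕ) : Prop :=
  a.1 + a.2 < b.1 + b.2 ∨ (a.1 + a.2 = b.1 + b.2 ∧ a.1 ≤ b.1)

/-- `x^{d.1} y^{d.2}` is the tdlex-leading monomial of `p`. -/
def IsTdlexLM {F : Type*} [Field F] (p : MvPolynomial (Fin 2) F) (d : ℕ × ℕ) : Prop :=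
  coeff (deg2 d.1 d.2) p ≠ 0 ∧
    ∀ e : Fin 2 →₀ ℕ, coeff e p ≠ 0 → tdlexLE (e 0, e 1) d

/-- The initial (leading term) ideal of `I` w.r.t. tdlex. -/
noncomputable def ltIdeal {F : Type*} [Field F] (I : Ideal (MvPolynomial (Fin 2) F)) :
    Ideal (MvPolynomial (Fin 2) F) :=
  Ideal.span {q | ∃ p ∈ I, ∃ d : ℕ × ℕ, IsTdlexLM p d ∧ q = X 0 ^ d.1 * X 1 ^ d.2}

/-! ### Auxiliary lemmas -/

section Aux

lemma deg2_apply0 (a b : ℕ) : deg2 a b 0 = a := by simp [deg2, Finsupp.single_apply]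

lemma deg2_apply1 (a b : ℕ) : deg2 a b 1 = b := by simp [deg2, Finsupp.single_apply]

lemma eq_deg2 (d : Fin 2 →₀ ℕ) : d = deg2 (d 0) (d 1) := by
  ext i; fin_cases i
  · simp [deg2_apply0]
  · simp [deg2_apply1]

lemma deg2_inj {a b a' b' : ℕ} (h : deg2 a b = deg2 a' b') : a = a' ∧ b = b' :=
  ⟨by rw [← deg2_apply0 a b, h, deg2_apply0], by rw [← deg2_apply1 a b, h, deg2_apply1]⟩

lemma deg2_succ (a b : ℕ) : deg2 a (b + 1) = Finsupp.single 1 1 + deg2 a b := by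
  ext i; fin_cases i <;> simp [deg2, Finsupp.single_apply] <;> omega

lemma single11_add_apply0 (d : Fin 2 →₀ ℕ) :
    (Finsupp.single 1 1 + d : Fin 2 →₀ ℕ) 0 = d 0 := by
  simp [Finsupp.single_apply]

lemma single11_add_apply1 (d : Fin 2 →₀ ℕ) :
    (Finsupp.single 1 1 + d : Fin 2 →₀ ℕ) 1 = d 1 + 1 := by
  simp [Finsupp.single_apply]
  omega

lemma tdlexLE_of_lex {u v : ℕ × ℕ} (h : toLex (u.1 + u.2, u.1) ≤ toLex (v.1 + v.2, v.1)) :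
    tdlexLE u v := by
  rcases Prod.Lex.le_iff.mp h with h | ⟨h1, h2⟩
  · exact Or.inl h
  · exact Or.inr ⟨h1, h2⟩

lemma tdlexLE_sum {u v : ℕ × ℕ} (h : tdlexLE u v) : u.1 + u.2 ≤ v.1 + v.2 := by
  rcases h with h | ⟨h, _⟩ <;> omega

lemma tdlexLE_iff {a b c d : ℕ} :
    tdlexLE (a, b) (c, d) ↔ (a + b < c + d ∨ (a + b = c + d ∧ a ≤ c)) := Iff.rfl

/-- existence of a tdlex-maximal element of the support -/
lemma exists_LM {F : Type*} [Field F] {p : MvPolynomial (Fin 2) F} (hp : p ≠ 0) :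
    ∃ d : Fin 2 →₀ ℕ, d ∈ p.support ∧ ∀ e ∈ p.support, tdlexLE (e 0, e 1) (d 0, d 1) := by
  obtain ⟨d, hd, hmax⟩ := Finset.exists_max_image p.support
    (fun e => toLex (e 0 + e 1, e 0)) (support_nonempty.mpr hp)
  exact ⟨d, hd, fun e he => tdlexLE_of_lex (hmax e he)⟩

variable {F : Type*} [Field F]

/-- partial evaluation  y ↦ c, x ↦ X -/
noncomputable def phi (c : F) : MvPolynomial (Fin 2) F →ₐ[F] Polynomial F :=
  aeval (fun i : Fin 2 => if i = 0 then Polynomial.X else Polynomial.C c)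

lemma phi_eval (c : F) (p : MvPolynomial (Fin 2) F) (t : F) :
    Polynomial.eval t (phi c p) = eval (fun i : Fin 2 => if i = 0 then t else c) p := by
  induction p using MvPolynomial.induction_on with
  | C a => simp [phi]
  | add p q hp hq => simp [hp, hq]
  | mul_X p i hp =>
    rw [map_mul, Polynomial.eval_mul, hp, eval_mul, eval_X]
    congr 1
    fin_cases i <;> simp [phi]

lemma phi_natDegree_le (c : F) (p : MvPolynomial (Fin 2) F) (N : ℕ)
    (h : ∀ d ∈ p.support, d 0 ≤ N) : (phi c p).natDegree ≤ N := by
  have : phi c p = ∑ d ∈ p.support,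
      Polynomial.C (coeff d p) * (Polynomial.X ^ (d 0) * Polynomial.C c ^ (d 1)) := by
    rw [phi, aeval_def, eval₂_eq']
    refine Finset.sum_congr rfl fun d _ => ?_
    rw [Fin.prod_univ_two]
    simp
  rw [this]
  refine Polynomial.natDegree_sum_le_of_forall_le _ _ fun d hd => ?_
  refine (Polynomial.natDegree_mul_le).trans ?_
  simp only [Polynomial.natDegree_C, zero_add]
  refine (Polynomial.natDegree_mul_le).trans ?_
  rw [← Polynomial.C_pow]
  simp only [Polynomial.natDegree_C, add_zero, Polynomial.natDegree_X_pow]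
  exact h d hd

lemma coeff_eq_phi_zero (q : MvPolynomial (Fin 2) F) (n : ℕ) :
    coeff (deg2 n 0) q = (phi 0 q).coeff n := by
  have hq : phi 0 q = ∑ d ∈ q.support,
      Polynomial.C (coeff d q) * (Polynomial.X ^ (d 0) * Polynomial.C (0:F) ^ (d 1)) := by
    rw [phi, aeval_def, eval₂_eq']
    refine Finset.sum_congr rfl fun d _ => ?_
    rw [Fin.prod_univ_two]; simp
  rw [hq, Polynomial.finset_sum_coeff]
  have hterm : ∀ d : Fin 2 →₀ ℕ,
      (Polynomial.C (coeff d q) * (Polynomial.X ^ (d 0) * Polynomial.C (0:F) ^ (d 1))).coeff n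
      = if d = deg2 n 0 then coeff d q else 0 := by
    intro d
    rcases Nat.eq_zero_or_pos (d 1) with h1 | h1
    · rcases eq_or_ne (d 0) n with h0 | h0
      · have : d = deg2 n 0 := by rw [eq_deg2 d, h0, h1]
        simp [this, h1, deg2_apply0, deg2_apply1, Polynomial.coeff_C_mul,
          Polynomial.coeff_X_pow]
      · have : d ≠ deg2 n 0 := fun hc => h0 (by rw [hc, deg2_apply0])
        simp only [this, h1, Polynomial.coeff_C_mul, pow_zero, mul_one,
          Polynomial.coeff_X_pow, if_false, if_neg (fun hc : n = d 0 => h0 hc.symm), mul_zero]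
    · have hne : d ≠ deg2 n 0 := fun hc => by
        rw [hc, deg2_apply1] at h1; omega
      rw [show Polynomial.C (0:F) = 0 from map_zero _, zero_pow (by omega : d 1 ≠ 0)]
      simp [hne]
  rw [Finset.sum_congr rfl fun d _ => hterm d]
  rcases eq_or_ne (coeff (deg2 n 0) q) 0 with h | h
  · rw [h, Finset.sum_eq_zero]
    intro d hd
    split_ifs with hc
    · rw [hc, h]
    · rfl
  · rw [Finset.sum_eq_single (deg2 n 0)]
    · simp
    · intro b _ hb; simp [hb]
    · intro hmem; exact absurd (mem_support_iff.mpr h) hmem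

/-- substitution endomorphisms -/
noncomputable def shiftUp (c : F) : MvPolynomial (Fin 2) F →ₐ[F] MvPolynomial (Fin 2) F :=
  aeval (fun i : Fin 2 => if i = 0 then X 0 else X 1 + C c)

noncomputable def shiftDown (c : F) : MvPolynomial (Fin 2) F →ₐ[F] MvPolynomial (Fin 2) F :=
  aeval (fun i : Fin 2 => if i = 0 then X 0 else X 1 - C c)

lemma shiftDown_shiftUp (c : F) (p : MvPolynomial (Fin 2) F) :
    shiftDown c (shiftUp c p) = p := by
  have : (shiftDown c).comp (shiftUp c) = AlgHom.id F _ := by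
    apply MvPolynomial.algHom_ext
    intro i
    fin_cases i <;> simp [shiftUp, shiftDown]
  calc shiftDown c (shiftUp c p) = ((shiftDown c).comp (shiftUp c)) p := rfl
    _ = p := by rw [this]; rfl

lemma phi_zero_shiftUp (c : F) (p : MvPolynomial (Fin 2) F) :
    phi (0:F) (shiftUp c p) = phi c p := by
  have : (phi (0:F)).comp (shiftUp c) = phi c := by
    apply MvPolynomial.algHom_ext
    intro i
    fin_cases i <;> simp [shiftUp, phi]
  calc phi 0 (shiftUp c p) = ((phi (0:F)).comp (shiftUp c)) p := rfl
    _ = phi c p := by rw [this]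

lemma X1_dvd_of_coeff (q : MvPolynomial (Fin 2) F)
    (h : ∀ d : Fin 2 →₀ ℕ, d 1 = 0 → coeff d q = 0) :
    ∃ q1, q = X 1 * q1 := by
  refine ⟨∑ d ∈ q.support, monomial (d - Finsupp.single 1 1) (coeff d q), ?_⟩
  rw [Finset.mul_sum]
  conv_lhs => rw [q.as_sum]
  refine Finset.sum_congr rfl fun d hd => ?_
  have hd1 : d 1 ≠ 0 := fun h0 => (mem_support_iff.mp hd) (h d h0)
  have hle : Finsupp.single 1 1 ≤ d := by
    rw [Finsupp.single_le_iff]; omega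
  have : X (1 : Fin 2) * monomial (d - Finsupp.single 1 1) (coeff d q)
      = monomial (Finsupp.single 1 1 + (d - Finsupp.single 1 1)) (coeff d q) := by
    rw [monomial_single_add (e := 1), pow_one]
  rw [this, add_tsub_cancel_of_le hle]

lemma exists_factor (c : F) (p : MvPolynomial (Fin 2) F) (h : phi c p = 0) :
    ∃ q, p = (X 1 - C c) * q := by
  have h0 : phi (0:F) (shiftUp c p) = 0 := by rw [phi_zero_shiftUp, h]
  have hcoeff : ∀ d : Fin 2 →₀ ℕ, d 1 = 0 → coeff d (shiftUp c p) = 0 := by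
    intro d hd1
    have h2 := coeff_eq_phi_zero (shiftUp c p) (d 0)
    rw [h0] at h2
    rw [eq_deg2 d, hd1, h2, Polynomial.coeff_zero]
  obtain ⟨q1, hq1⟩ := X1_dvd_of_coeff (shiftUp c p) hcoeff
  refine ⟨shiftDown c q1, ?_⟩
  have h3 : shiftDown c (shiftUp c p) = shiftDown c (X 1 * q1) := by rw [hq1]
  rw [shiftDown_shiftUp, map_mul] at h3
  rw [h3]
  congr 1
  simp [shiftDown]

/-- dividing by `(y - c)` shifts the tdlex leading monomial down by one in `y`. -/
lemma LM_div {p q : MvPolynomial (Fin 2) F} {c : F} {a b : ℕ}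
    (hq : q ≠ 0) (hpq : p = (X 1 - C c) * q) (h : IsTdlexLM p (a, b)) :
    ∃ b', b = b' + 1 ∧ IsTdlexLM q (a, b') := by
  classical
  obtain ⟨d, hd, hmax⟩ := exists_LM hq
  have hdq : coeff d q ≠ 0 := mem_support_iff.mp hd
  have key : coeff (Finsupp.single 1 1 + d) p = coeff d q := by
    have hz : coeff (Finsupp.single 1 1 + d) q = 0 := by
      by_contra hne
      have h2 := hmax _ (mem_support_iff.mpr hne)
      rw [single11_add_apply0, single11_add_apply1] at h2
      have := tdlexLE_iff.mp h2
      omega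
    rw [hpq, sub_mul, coeff_sub, coeff_X_mul, coeff_C_mul, hz, mul_zero, sub_zero]
  have hstar : tdlexLE (d 0, d 1 + 1) (a, b) := by
    have := h.2 _ (key ▸ hdq)
    rwa [single11_add_apply0, single11_add_apply1] at this
  have hcoeffp : coeff (deg2 a b) p ≠ 0 := h.1
  rw [hpq, sub_mul, coeff_sub, coeff_C_mul] at hcoeffp
  cases b with
  | zero =>
    exfalso
    have hXq : coeff (deg2 a 0) (X (1 : Fin 2) * q) = 0 := by
      rw [coeff_X_mul']
      simp [Finsupp.mem_support_iff, deg2_apply1]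
    have hq0 : coeff (deg2 a 0) q = 0 := by
      by_contra hne
      have h1 := hmax _ (mem_support_iff.mpr hne)
      rw [deg2_apply0, deg2_apply1] at h1
      have h1' := tdlexLE_iff.mp h1
      have h2' := tdlexLE_iff.mp hstar
      omega
    rw [hXq, hq0, mul_zero, sub_zero] at hcoeffp
    exact hcoeffp rfl
  | succ b' =>
    have hX : coeff (deg2 a (b' + 1)) (X (1 : Fin 2) * q) = coeff (deg2 a b') q := by
      rw [deg2_succ, coeff_X_mul]
    have hqcoeff : coeff (deg2 a b') q ≠ 0 := by
      by_contra h0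
      have hq2 : coeff (deg2 a (b' + 1)) q ≠ 0 := by
        intro hz
        rw [hX, h0, hz, mul_zero, sub_zero] at hcoeffp
        exact hcoeffp rfl
      have h1 := hmax _ (mem_support_iff.mpr hq2)
      rw [deg2_apply0, deg2_apply1] at h1
      have h1' := tdlexLE_iff.mp h1
      have h2' := tdlexLE_iff.mp hstar
      omega
    have h1 := hmax _ (mem_support_iff.mpr hqcoeff)
    rw [deg2_apply0, deg2_apply1] at h1
    have hda : d 0 = a ∧ d 1 = b' := by
      have h1' := tdlexLE_iff.mp h1
      have h2' := tdlexLE_iff.mp hstar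
      constructor <;> omega
    refine ⟨b', rfl, hqcoeff, ?_⟩
    intro e he
    have h2 := hmax e (mem_support_iff.mpr he)
    rwa [hda.1, hda.2] at h2

end Aux

section Key

variable {F : Type*} [Field F] (ν : ℕ) (m : ℕ → ℕ) (y : ℕ → F) (xs : ℕ → ℕ → F)

lemma gap_aux (hm : ∀ j k, j < k → k ≤ ν → m k < m j) :
    ∀ t j, j + t ≤ ν → m (j + t) + (j + t) ≤ m j + j := by
  intro t
  induction t with
  | zero => intro j _; simp
  | succ t ih =>
    intro j h
    have h1 : m (j + t + 1) < m (j + t) := hm (j + t) (j + t + 1) (by omega) (by omega)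
    have h2 := ih j (by omega)
    have h3 : j + (t + 1) = j + t + 1 := by omega
    rw [h3]
    omega

lemma gap (hm : ∀ j k, j < k → k ≤ ν → m k < m j) {j k : ℕ} (hjk : j ≤ k) (hk : k ≤ ν) :
    m k + k ≤ m j + j := by
  have := gap_aux ν m hm (k - j) j (by omega)
  rw [(by omega : j + (k - j) = k)] at this
  exact this

lemma factor_step (hm : ∀ j k, j < k → k ≤ ν → m k < m j)
    (hx : ∀ j s t, j ≤ ν → s ≤ m j → t ≤ m j → xs s j = xs t j → s = t)
    {p : MvPolynomial (Fin 2) F} (a b k : ℕ)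
    (hbk : b + k ≤ ν) (ha : a ≤ m (b + k))
    (hvan : ∀ r, k ≤ r → r ≤ ν → ∀ i, i ≤ m r →
      eval (fun l : Fin 2 => if l = 0 then xs i r else y r) p = 0)
    (h : IsTdlexLM p (a, b)) :
    ∃ q, p = (X 1 - C (y k)) * q := by
  classical
  have hk : k ≤ ν := by omega
  have habk : a + b ≤ m k := by
    have := gap ν m hm (j := k) (k := b + k) (by omega) hbk
    omega
  have hdeg : (phi (y k) p).natDegree ≤ m k := by
    refine phi_natDegree_le _ _ _ fun d hd => ?_
    have h1 := tdlexLE_iff.mp (h.2 d (mem_support_iff.mp hd))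
    omega
  have hzero : phi (y k) p = 0 := by
    refine Polynomial.eq_zero_of_natDegree_lt_card_of_eval_eq_zero' _
      ((Finset.range (m k + 1)).image (fun s => xs s k)) ?_ ?_
    · intro t ht
      obtain ⟨s, hs, rfl⟩ := Finset.mem_image.mp ht
      rw [phi_eval]
      exact hvan k le_rfl hk s (by have := Finset.mem_range.mp hs; omega)
    · have hcard : ((Finset.range (m k + 1)).image (fun s => xs s k)).card = m k + 1 := by
        rw [Finset.card_image_of_injOn, Finset.card_range]
        intro s hs t ht hst
        exact hx k s t hk (by have := Finset.mem_range.mp hs; omega)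
          (by have := Finset.mem_range.mp ht; omega) hst
      omega
  exact exists_factor (y k) p hzero

lemma keyB_aux (hm : ∀ j k, j < k → k ≤ ν → m k < m j)
    (hy : ∀ j k, j ≤ ν → k ≤ ν → y j = y k → j = k)
    (hx : ∀ j s t, j ≤ ν → s ≤ m j → t ≤ m j → xs s j = xs t j → s = t) :
    ∀ b k a (p : MvPolynomial (Fin 2) F),
      (∀ r, k ≤ r → r ≤ ν → ∀ i, i ≤ m r →
        eval (fun l : Fin 2 => if l = 0 then xs i r else y r) p = 0) →
      IsTdlexLM p (a, b) → (ν < b + k ∨ m (b + k) < a) := by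
  intro b
  induction b with
  | zero =>
    intro k a p hvan h
    by_cases hk : ν < k
    · left; omega
    by_cases ha : m k < a
    · right; simpa using ha
    push_neg at hk ha
    exfalso
    obtain ⟨q, hq⟩ := factor_step ν m y xs hm hx a 0 k (by omega) (by simpa using ha) hvan h
    have hq0 : q ≠ 0 := by
      intro h0
      rw [h0, mul_zero] at hq
      exact h.1 (by rw [hq, coeff_zero])
    obtain ⟨b', hb', _⟩ := LM_div hq0 hq h
    omega
  | succ b ih =>
    intro k a p hvan h
    by_cases hk : ν < b + 1 + k
    · left; omega
    by_cases ha : m (b + 1 + k) < a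
    · right; exact ha
    push_neg at hk ha
    exfalso
    obtain ⟨q, hq⟩ := factor_step ν m y xs hm hx a (b + 1) k hk ha hvan h
    have hq0 : q ≠ 0 := by
      intro h0
      rw [h0, mul_zero] at hq
      exact h.1 (by rw [hq, coeff_zero])
    obtain ⟨b', hb', hLMq⟩ := LM_div hq0 hq h
    have hb'' : b' = b := by omega
    rw [hb''] at hLMq
    have hvanq : ∀ r, k + 1 ≤ r → r ≤ ν → ∀ i, i ≤ m r →
        eval (fun l : Fin 2 => if l = 0 then xs i r else y r) q = 0 := by
      intro r hr hrv i hi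
      have h0 := hvan r (by omega) hrv i hi
      rw [hq, eval_mul, eval_sub, eval_X, eval_C] at h0
      have hyr : y r ≠ y k := by
        intro hc
        have := hy r k hrv (by omega) hc
        omega
      have hne : (if (1 : Fin 2) = 0 then xs i r else y r) - y k ≠ 0 := by
        simp only [if_neg (by decide : ¬(1 : Fin 2) = 0)]
        exact sub_ne_zero_of_ne hyr
      rcases mul_eq_zero.mp h0 with h0 | h0
      · exact absurd h0 hne
      · exact h0
    have := ih (k + 1) a q hvanq hLMq
    rw [(by omega : b + (k + 1) = b + 1 + k)] at this
    omega

lemma keyB (hm : ∀ j k, j < k → k ≤ ν → m k < m j)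
    (hy : ∀ j k, j ≤ ν → k ≤ ν → y j = y k → j = k)
    (hx : ∀ j s t, j ≤ ν → s ≤ m j → t ≤ m j → xs s j = xs t j → s = t)
    {p : MvPolynomial (Fin 2) F} {a b : ℕ}
    (hvan : ∀ j, j ≤ ν → ∀ i, i ≤ m j →
      eval (fun l : Fin 2 => if l = 0 then xs i j else y j) p = 0)
    (h : IsTdlexLM p (a, b)) : ν < b ∨ m b < a := by
  have := keyB_aux ν m y xs hm hy hx b 0 a p (fun r _ hr i hi => hvan r hr i hi) h
  simpa using this

end Key

section Interp

variable {F : Type*} [Field F]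

lemma monomial_deg2 (a b : ℕ) (r : F) :
    (monomial (deg2 a b) r : MvPolynomial (Fin 2) F) = C r * X 0 ^ a * X 1 ^ b := by
  rw [C_apply, X_pow_eq_monomial, X_pow_eq_monomial, monomial_mul, monomial_mul]
  simp [deg2]

lemma eval_monomial_deg2 (a b : ℕ) (r t c : F) :
    eval (fun l : Fin 2 => if l = 0 then t else c) (monomial (deg2 a b) r : MvPolynomial (Fin 2) F)
      = r * t ^ a * c ^ b := by
  rw [monomial_deg2]
  simp

lemma exists_interp (ν : ℕ) (m : ℕ → ℕ) (y : ℕ → F) (xs : ℕ → ℕ → F)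
    (hm : ∀ j k, j < k → k ≤ ν → m k < m j)
    (hy : ∀ j k, j ≤ ν → k ≤ ν → y j = y k → j = k)
    (hx : ∀ j s t, j ≤ ν → s ≤ m j → t ≤ m j → xs s j = xs t j → s = t)
    (A B : ℕ) (hAB : ¬(B ≤ ν ∧ A ≤ m B)) :
    ∃ f : MvPolynomial (Fin 2) F,
      (∀ j, j ≤ ν → ∀ i, i ≤ m j →
        eval (fun l : Fin 2 => if l = 0 then xs i j else y j) f = 0) ∧
      IsTdlexLM f (A, B) := by
  classical
  set T : Finset (ℕ × ℕ) := (Finset.range (ν + 1)).biUnion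
      (fun b => (Finset.range (m b + 1)).image (fun a => (a, b))) with hTdef
  have hT : ∀ d : ℕ × ℕ, d ∈ T ↔ d.2 ≤ ν ∧ d.1 ≤ m d.2 := by
    intro d
    simp only [hTdef, Finset.mem_biUnion, Finset.mem_image, Finset.mem_range]
    constructor
    · rintro ⟨b, hb, a, ha, rfl⟩
      exact ⟨show b ≤ ν from by omega, show a ≤ m b from by omega⟩
    · rintro ⟨h1, h2⟩
      exact ⟨d.2, by omega, d.1, by omega, rfl⟩
  let P : ({d // d ∈ T} → F) → MvPolynomial (Fin 2) F :=
    fun c => ∑ s : {d // d ∈ T}, monomial (deg2 s.1.1 s.1.2) (c s)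
  have hPcoeff : ∀ (c : {d // d ∈ T} → F) (s0 : {d // d ∈ T}),
      coeff (deg2 s0.1.1 s0.1.2) (P c) = c s0 := by
    intro c s0
    rw [show P c = ∑ s : {d // d ∈ T}, monomial (deg2 s.1.1 s.1.2) (c s) from rfl, coeff_sum]
    rw [Finset.sum_eq_single s0]
    · rw [coeff_monomial, if_pos rfl]
    · intro b _ hb
      rw [coeff_monomial, if_neg]
      intro hc
      obtain ⟨h1, h2⟩ := deg2_inj hc
      exact hb (Subtype.ext (Prod.ext h1 h2))
    · intro hmem; exact absurd (Finset.mem_univ s0) hmem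
  have hPsupp : ∀ (c : {d // d ∈ T} → F) (e : Fin 2 →₀ ℕ),
      coeff e (P c) ≠ 0 → ((e 0, e 1) : ℕ × ℕ) ∈ T := by
    intro c e he
    by_contra hmem
    apply he
    rw [show P c = ∑ s : {d // d ∈ T}, monomial (deg2 s.1.1 s.1.2) (c s) from rfl, coeff_sum]
    refine Finset.sum_eq_zero fun s _ => ?_
    rw [coeff_monomial, if_neg]
    intro hc
    apply hmem
    have h0 : e 0 = s.1.1 := by rw [← hc, deg2_apply0]
    have h1 : e 1 = s.1.2 := by rw [← hc, deg2_apply1]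
    rw [h0, h1]
    exact s.2
  let M : Matrix {d // d ∈ T} {d // d ∈ T} F :=
    Matrix.of fun t s => xs t.1.1 t.1.2 ^ s.1.1 * y t.1.2 ^ s.1.2
  let L : ({d // d ∈ T} → F) →ₗ[F] ({d // d ∈ T} → F) := M.mulVecLin
  have hEvalL : ∀ (c : {d // d ∈ T} → F) (i j : ℕ) (hij : ((i, j) : ℕ × ℕ) ∈ T),
      eval (fun l : Fin 2 => if l = 0 then xs i j else y j) (P c) = L c ⟨(i, j), hij⟩ := by
    intro c i j hij
    rw [show P c = ∑ s : {d // d ∈ T}, monomial (deg2 s.1.1 s.1.2) (c s) from rfl, map_sum]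
    rw [show L c ⟨(i, j), hij⟩ = ∑ s : {d // d ∈ T},
        (xs i j ^ s.1.1 * y j ^ s.1.2) * c s from by
      simp [L, M, Matrix.mulVecLin_apply, Matrix.mulVec, dotProduct]]
    refine Finset.sum_congr rfl fun s _ => ?_
    rw [eval_monomial_deg2]
    ring
  have hvanP : ∀ (c : {d // d ∈ T} → F), L c = 0 → ∀ j, j ≤ ν → ∀ i, i ≤ m j →
      eval (fun l : Fin 2 => if l = 0 then xs i j else y j) (P c) = 0 := by
    intro c hc j hj i hi
    have hmem : ((i, j) : ℕ × ℕ) ∈ T := (hT _).mpr ⟨hj, hi⟩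
    rw [hEvalL c i j hmem, hc]
    rfl
  have hLinj : Function.Injective L := by
    have hker : ∀ c, L c = 0 → c = 0 := by
      intro c hc
      by_contra hc0
      obtain ⟨s0, hs0⟩ := Function.ne_iff.mp hc0
      have hp0 : P c ≠ 0 := fun h => hs0 (by rw [← hPcoeff c s0, h, coeff_zero]; rfl)
      obtain ⟨dd, hdd, hmax⟩ := exists_LM hp0
      have hLM : IsTdlexLM (P c) (dd 0, dd 1) :=
        ⟨by rw [← eq_deg2]; exact mem_support_iff.mp hdd,
          fun e he => hmax e (mem_support_iff.mpr he)⟩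
      have hreg := keyB ν m y xs hm hy hx (hvanP c hc) hLM
      have hmem := (hT _).mp (hPsupp c dd (mem_support_iff.mp hdd))
      have h1 : dd 1 ≤ ν := hmem.1
      have h2 : dd 0 ≤ m (dd 1) := hmem.2
      rcases hreg with h | h <;> omega
    intro c1 c2 h12
    have := hker (c1 - c2) (by rw [map_sub, h12, sub_self])
    exact sub_eq_zero.mp this
  have hLsurj : Function.Surjective L := LinearMap.injective_iff_surjective.mp hLinj
  obtain ⟨c, hc⟩ := hLsurj (fun t => xs t.1.1 t.1.2 ^ A * y t.1.2 ^ B)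
  refine ⟨monomial (deg2 A B) 1 - P c, ?_, ?_⟩
  · intro j hj i hi
    have hmem : ((i, j) : ℕ × ℕ) ∈ T := (hT _).mpr ⟨hj, hi⟩
    rw [map_sub, eval_monomial_deg2, hEvalL c i j hmem, hc, one_mul]
    simp
  · have hABT : ((A, B) : ℕ × ℕ) ∉ T := fun h => hAB ((hT _).mp h)
    have hPc0 : coeff (deg2 A B) (P c) = 0 := by
      by_contra hne
      apply hABT
      have := hPsupp c _ hne
      rwa [deg2_apply0, deg2_apply1] at this
    have hcf : coeff (deg2 A B) (monomial (deg2 A B) 1 - P c) ≠ 0 := by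
      rw [coeff_sub, coeff_monomial, if_pos rfl, hPc0, sub_zero]
      exact one_ne_zero
    have hf0 : (monomial (deg2 A B) 1 - P c : MvPolynomial (Fin 2) F) ≠ 0 :=
      fun h => hcf (by rw [h, coeff_zero])
    obtain ⟨dd, hdd, hmax⟩ := exists_LM hf0
    have hLM : IsTdlexLM (monomial (deg2 A B) 1 - P c) (dd 0, dd 1) :=
      ⟨by rw [← eq_deg2]; exact mem_support_iff.mp hdd,
        fun e he => hmax e (mem_support_iff.mpr he)⟩
    have hvanf : ∀ j, j ≤ ν → ∀ i, i ≤ m j →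
        eval (fun l : Fin 2 => if l = 0 then xs i j else y j)
          (monomial (deg2 A B) 1 - P c) = 0 := by
      intro j hj i hi
      have hmem : ((i, j) : ℕ × ℕ) ∈ T := (hT _).mpr ⟨hj, hi⟩
      rw [map_sub, eval_monomial_deg2, hEvalL c i j hmem, hc, one_mul]
      simp
    have hreg := keyB ν m y xs hm hy hx hvanf hLM
    have hddAB : dd 0 = A ∧ dd 1 = B := by
      have hcoeffdd := mem_support_iff.mp hdd
      rw [coeff_sub] at hcoeffdd
      have hPdd : coeff dd (P c) = 0 := by
        by_contra hne
        have hmem := (hT _).mp (hPsupp c dd hne)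
        have h1 : dd 1 ≤ ν := hmem.1
        have h2 : dd 0 ≤ m (dd 1) := hmem.2
        rcases hreg with h | h <;> omega
      rw [hPdd, sub_zero, coeff_monomial] at hcoeffdd
      by_cases hcc : deg2 A B = dd
      · constructor
        · rw [← hcc, deg2_apply0]
        · rw [← hcc, deg2_apply1]
      · rw [if_neg hcc] at hcoeffdd
        exact absurd rfl hcoeffdd
    refine ⟨hcf, fun e he => ?_⟩
    have := hmax e (mem_support_iff.mpr he)
    rwa [hddAB.1, hddAB.2] at this

end Interp

lemma mem_vanishingIdeal' {F : Type*} [Field F] (Ξ : Set (F × F))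
    (p : MvPolynomial (Fin 2) F) :
    p ∈ _root_.vanishingIdeal Ξ ↔
      ∀ ξ ∈ Ξ, eval (fun i : Fin 2 => if i = 0 then ξ.1 else ξ.2) p = 0 := by
  simp only [_root_.vanishingIdeal, Ideal.mem_iInf, RingHom.mem_ker]

/-- for an x-tower site with parameters `m_0 > m_1 > ⋯ > m_ν ≥ 0`, the
initial ideal of `I(Ξ)` w.r.t. tdlex is generated by
`x^{m_0+1}, x^{m_1+1}y, …, x^{m_ν+1}y^ν, y^{ν+1}`. -/
theorem tower_initial_ideal {F : Type*} [Field F] (ν : ℕ) (m : ℕ → ℕ)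
    (y : ℕ → F) (xs : ℕ → ℕ → F)
    (hm : ∀ j k, j < k → k ≤ ν → m k < m j)
    (hy : ∀ j k, j ≤ ν → k ≤ ν → y j = y k → j = k)
    (hx : ∀ j s t, j ≤ ν → s ≤ m j → t ≤ m j → xs s j = xs t j → s = t)
    (hbottom : ∀ j ≤ ν, ∀ i ≤ m j, ∃ s ≤ m 0, xs i j = xs s 0) :
    ltIdeal (vanishingIdeal {p : F × F | ∃ j ≤ ν, ∃ i ≤ m j, p = (xs i j, y j)}) =
      Ideal.span
        ({q | ∃ j ≤ ν, q = (X 0 ^ (m j + 1) * X 1 ^ j : MvPolynomial (Fin 2) F)} ∪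
          {(X 1 ^ (ν + 1) : MvPolynomial (Fin 2) F)}) := by
  apply le_antisymm
  · rw [ltIdeal, Ideal.span_le]
    rintro q ⟨p, hp, ⟨d1, d2⟩, hLM, rfl⟩
    have hvan : ∀ j, j ≤ ν → ∀ i, i ≤ m j →
        eval (fun l : Fin 2 => if l = 0 then xs i j else y j) p = 0 := by
      intro j hj i hi
      exact (mem_vanishingIdeal' _ p).mp hp (xs i j, y j) ⟨j, hj, i, hi, rfl⟩
    have hreg := keyB ν m y xs hm hy hx hvan hLM
    by_cases hν : ν < d2
    · rw [SetLike.mem_coe, show (X 0 ^ ((d1, d2) : ℕ × ℕ).1 * X 1 ^ ((d1, d2) : ℕ × ℕ).2 :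
          MvPolynomial (Fin 2) F)
          = (X 0 ^ d1 * X 1 ^ (d2 - (ν + 1))) * X 1 ^ (ν + 1) from by
        show (X 0 ^ d1 * X 1 ^ d2 : MvPolynomial (Fin 2) F) = _
        rw [mul_assoc, ← pow_add]
        have hω : d2 - (ν + 1) + (ν + 1) = d2 := by omega
        rw [hω]]
      exact Ideal.mul_mem_left _ _ (Ideal.subset_span (Or.inr rfl))
    · have hmd : m d2 < d1 := by
        rcases hreg with h | h
        · exact absurd h hν
        · exact h
      rw [SetLike.mem_coe, show (X 0 ^ ((d1, d2) : ℕ × ℕ).1 * X 1 ^ ((d1, d2) : ℕ × ℕ).2 :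
          MvPolynomial (Fin 2) F)
          = X 0 ^ (d1 - (m d2 + 1)) * (X 0 ^ (m d2 + 1) * X 1 ^ d2) from by
        show (X 0 ^ d1 * X 1 ^ d2 : MvPolynomial (Fin 2) F) = _
        rw [← mul_assoc, ← pow_add]
        have hω : d1 - (m d2 + 1) + (m d2 + 1) = d1 := by omega
        rw [hω]]
      exact Ideal.mul_mem_left _ _
        (Ideal.subset_span (Or.inl ⟨d2, by omega, rfl⟩))
  · rw [Ideal.span_le]
    rintro q hq
    rcases hq with ⟨j, hj, rfl⟩ | hq
    · obtain ⟨f, hfvan, hfLM⟩ := exists_interp ν m y xs hm hy hx (m j + 1) j (by omega)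
      refine SetLike.mem_coe.mpr (Ideal.subset_span ⟨f, ?_, (m j + 1, j), hfLM, rfl⟩)
      rw [mem_vanishingIdeal']
      rintro ξ ⟨j', hj', i', hi', rfl⟩
      exact hfvan j' hj' i' hi'
    · rw [Set.mem_singleton_iff] at hq
      subst hq
      obtain ⟨f, hfvan, hfLM⟩ := exists_interp ν m y xs hm hy hx 0 (ν + 1) (by omega)
      refine SetLike.mem_coe.mpr (Ideal.subset_span ⟨f, ?_, (0, ν + 1), hfLM, ?_⟩)
      · rw [mem_vanishingIdeal']
        rintro ξ ⟨j', hj', i', hi', rfl⟩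
        exact hfvan j' hj' i' hi'
      · rw [pow_zero, one_mul]
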